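/- Let P ⊆ ℝ^d be a full-dimensional lattice polytope with codegree a satisfying P = ⌊aP⌋ + {P}. Then for every integer k' ≥ a, one has ⌊k'P⌋ = ⌊aP⌋ + (k'−a)P. -/

import Mathlib

open Set Pointwise

/-- The set of lattice points of `ℝ^d`. -/
def latticePoints (d : ℕ) : Set (Fin d → ℝ) :=
  {x | ∀ i, ∃ z : ℤ, x i = (z : ℝ)}

/-- A lattice polytope: the convex hull of a finite set of lattice points. -/
def IsLatticePolytope {d : ℕ} (P : Set (Fin d → ℝ)) : Prop :=
  ∃ V : Finset (Fin d → ℝ), (V : Set (Fin d → ℝ)) ⊆ latticePoints d ∧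
    P = convexHull ℝ (V : Set (Fin d → ℝ))

/-- The natural pairing of an integral linear functional with a point of `ℝ^d`. -/
def pairing {d : ℕ} (n : Fin d → ℤ) (x : Fin d → ℝ) : ℝ :=
  ∑ i, (n i : ℝ) * x i

/-- `P = {x | n_F(x) ≥ -h_F}` is an irredundant presentation with primitive
integral inner normals, i.e. the facet presentation of `P`. -/
def IsFacetPresentation {d m : ℕ} (P : Set (Fin d → ℝ))
    (n : Fin m → Fin d → ℤ) (h : Fin m → ℤ) : Prop :=
  P = {x | ∀ i, pairing (n i) x ≥ -(h i : ℝ)} ∧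
  (∀ i, Finset.univ.gcd (n i) = 1) ∧
  (∀ i, ∃ x : Fin d → ℝ, pairing (n i) x < -(h i : ℝ) ∧
    ∀ j, j ≠ i → pairing (n j) x ≥ -(h j : ℝ))

/-- `a` is the codegree of `P`: the least `k ≥ 1` such that `int(kP)` contains
a lattice point. -/
def IsCodegree {d : ℕ} (P : Set (Fin d → ℝ)) (a : ℕ) : Prop :=
  1 ≤ a ∧ (interior ((a : ℝ) • P) ∩ latticePoints d).Nonempty ∧
    ∀ k : ℕ, 1 ≤ k → (interior ((k : ℝ) • P) ∩ latticePoints d).Nonempty → a ≤ k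

/-- The floor polytope `⌊R⌋ = conv(int(R) ∩ ℤ^d)`. -/
def floorPoly {d : ℕ} (R : Set (Fin d → ℝ)) : Set (Fin d → ℝ) :=
  convexHull ℝ (interior R ∩ latticePoints d)

/-- The remainder polytope `{P} = conv{x ∈ ℤ^d | n_F(x) ≥ (a-1)h_F - 1}`,
defined in terms of the facet presentation data and the codegree `a`. -/
def remPoly {d m : ℕ} (n : Fin m → Fin d → ℤ) (h : Fin m → ℤ) (a : ℕ) :
    Set (Fin d → ℝ) :=
  convexHull ℝ {x | x ∈ latticePoints d ∧
    ∀ i, pairing (n i) x ≥ ((a : ℝ) - 1) * (h i : ℝ) - 1}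

/-- The cone `C_P ⊆ ℝ^d × ℝ` over `P`, in terms of the facet presentation. -/
def coneOver {d m : ℕ} (n : Fin m → Fin d → ℤ) (h : Fin m → ℤ) :
    Set ((Fin d → ℝ) × ℝ) :=
  {p | ∀ i, pairing (n i) p.1 ≥ -(p.2 * (h i : ℝ))}

/-- The interior `int(C_P)` of the cone over `P`. -/
def intCone {d m : ℕ} (n : Fin m → Fin d → ℤ) (h : Fin m → ℤ) :
    Set ((Fin d → ℝ) × ℝ) :=
  {p | ∀ i, pairing (n i) p.1 > -(p.2 * (h i : ℝ))}

/-- The anticanonical set `ant(C_P)` of the cone over `P`. -/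
def antCone {d m : ℕ} (n : Fin m → Fin d → ℤ) (h : Fin m → ℤ) :
    Set ((Fin d → ℝ) × ℝ) :=
  {p | ∀ i, pairing (n i) p.1 ≥ -(p.2 * (h i : ℝ)) - 1}

/-- Lattice points of `ℝ^d × ℝ = ℝ^{d+1}`. -/
def latticePairs (d : ℕ) : Set ((Fin d → ℝ) × ℝ) :=
  {p | p.1 ∈ latticePoints d ∧ ∃ z : ℤ, p.2 = (z : ℝ)}

/-- The nearly Gorenstein condition with respect to a given facet presentation:
`(C_P ∩ ℤ^{d+1}) \ {0} ⊆ (int(C_P) ∩ ℤ^{d+1}) + (ant(C_P) ∩ ℤ^{d+1})`. -/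
def NGIncl {d m : ℕ} (n : Fin m → Fin d → ℤ) (h : Fin m → ℤ) : Prop :=
  (coneOver n h ∩ latticePairs d) \ {(0 : (Fin d → ℝ) × ℝ)} ⊆
    (intCone n h ∩ latticePairs d) + (antCone n h ∩ latticePairs d)

/-- A full-dimensional lattice polytope is nearly Gorenstein if the nearly
Gorenstein inclusion holds for its facet presentation. -/
def NearlyGorenstein {d : ℕ} (P : Set (Fin d → ℝ)) : Prop :=
  ∃ (m : ℕ) (n : Fin m → Fin d → ℤ) (h : Fin m → ℤ),
    IsFacetPresentation P n h ∧ NGIncl n h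

/-- The polar dual `Q* = {y | y(x) ≥ -1 for all x ∈ Q}`. -/
def polarDual {d : ℕ} (Q : Set (Fin d → ℝ)) : Set (Fin d → ℝ) :=
  {y | ∀ x ∈ Q, (∑ i, y i * x i) ≥ -1}

/-- A reflexive polytope: a lattice polytope with `0` in its interior whose
polar dual is again a lattice polytope. -/
def IsReflexive {d : ℕ} (Q : Set (Fin d → ℝ)) : Prop :=
  IsLatticePolytope Q ∧ (0 : Fin d → ℝ) ∈ interior Q ∧
    IsLatticePolytope (polarDual Q)

/-- A Gorenstein polytope: some dilate `kP`, translated by a lattice vector,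
is reflexive. -/
def IsGorenstein {d : ℕ} (P : Set (Fin d → ℝ)) : Prop :=
  ∃ (k : ℕ) (w : Fin d → ℝ), 1 ≤ k ∧ w ∈ latticePoints d ∧
    IsReflexive ((fun x => x - w) '' ((k : ℝ) • P))

/-- The integer decomposition property. -/
def IsIDP {d : ℕ} (P : Set (Fin d → ℝ)) : Prop :=
  ∀ k : ℕ, 1 ≤ k → ∀ x ∈ ((k : ℝ) • P) ∩ latticePoints d,
    ∃ y : Fin k → Fin d → ℝ, (∀ j, y j ∈ P ∩ latticePoints d) ∧ x = ∑ j, y j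

/-- Minkowski indecomposability of a lattice polytope. -/
def IsIndecomposable {d : ℕ} (P : Set (Fin d → ℝ)) : Prop :=
  (¬ ∃ p : Fin d → ℝ, P = {p}) ∧
  ∀ P₁ P₂ : Set (Fin d → ℝ), IsLatticePolytope P₁ → IsLatticePolytope P₂ →
    P = P₁ + P₂ → (∃ p, P₁ = {p}) ∨ (∃ p, P₂ = {p})

/-- A `(0,1)`-polytope: the convex hull of a set of `(0,1)`-vectors. -/
def Is01Polytope {d : ℕ} (P : Set (Fin d → ℝ)) : Prop :=
  ∃ V : Finset (Fin d → ℝ), (∀ v ∈ V, ∀ i, v i = 0 ∨ v i = 1) ∧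
    P = convexHull ℝ (V : Set (Fin d → ℝ))


section Cone

variable {E : Type*} [NormedAddCommGroup E] [NormedSpace ℝ E] [FiniteDimensional ℝ E]

/-- Carathéodory for cones: a nonneg combination can be re-expressed with linearly
independent support. -/
lemma coneGen_cara {r : ℕ} (v : Fin r → E) (s : Finset (Fin r)) :
    ∀ l : Fin r → ℝ, (∀ i, 0 ≤ l i) → (∀ i ∉ s, l i = 0) →
    ∃ (J : Finset (Fin r)) (l' : Fin r → ℝ), LinearIndependent ℝ (fun i : J => v i) ∧
      (∀ i, 0 ≤ l' i) ∧ (∀ i ∉ J, l' i = 0) ∧ ∑ i, l' i • v i = ∑ i, l i • v i := by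
  classical
  induction s using Finset.strongInduction with
  | _ s IH =>
    intro l hl0 hls
    by_cases hli : LinearIndependent ℝ (fun i : s => v i)
    · exact ⟨s, l, hli, hl0, hls, rfl⟩
    · obtain ⟨g, hsum, i₀, hi₀⟩ :
          ∃ g : {x // x ∈ s} → ℝ, (∑ i, g i • v i = 0) ∧ ∃ i₀, 0 < g i₀ := by
        obtain ⟨g, hsum, i₀, hne⟩ := Fintype.not_linearIndependent_iff.1 hli
        rcases hne.lt_or_gt with hneg | hpos
        · refine ⟨-g, ?_, i₀, by simpa using hneg⟩
          have : ∑ i, (-g) i • v (i:Fin r) = -∑ i, g i • v (i:Fin r) := by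
            simp [neg_smul, Finset.sum_neg_distrib]
          rw [this, hsum, neg_zero]
        · exact ⟨g, hsum, i₀, hpos⟩
      set gh : Fin r → ℝ := fun i => if h : i ∈ s then g ⟨i, h⟩ else 0 with hgh
      have hghsum : ∑ i, gh i • v i = 0 := by
        rw [← Finset.sum_subset (Finset.subset_univ s) (by
          intro i _ hi
          simp [hgh, dif_neg hi])]
        rw [← Finset.sum_attach s (fun i => gh i • v i)]
        simpa [hgh] using hsum
      have hi₀s : (i₀ : Fin r) ∈ s := i₀.2
      have hghi₀ : 0 < gh i₀ := by simp [hgh, dif_pos i₀.2, hi₀]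
      set T : Finset (Fin r) := s.filter (fun i => 0 < gh i) with hT
      have hTne : T.Nonempty := ⟨i₀, by simp [hT, hi₀s, hghi₀]⟩
      obtain ⟨i₁, hi₁T, hmin⟩ := T.exists_min_image (fun i => l i / gh i) hTne
      have hi₁s : i₁ ∈ s := (Finset.mem_filter.1 hi₁T).1
      have hgi₁ : 0 < gh i₁ := (Finset.mem_filter.1 hi₁T).2
      set t : ℝ := l i₁ / gh i₁ with ht
      have ht0 : 0 ≤ t := div_nonneg (hl0 i₁) hgi₁.le
      set l' : Fin r → ℝ := fun i => l i - t * gh i with hl'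
      have hl'0 : ∀ i, 0 ≤ l' i := by
        intro i
        by_cases hiT : i ∈ T
        · have hgi : 0 < gh i := (Finset.mem_filter.1 hiT).2
          have := hmin i hiT
          have : t * gh i ≤ l i := by
            rw [ht] at *
            calc t * gh i ≤ (l i / gh i) * gh i := by
                  exact mul_le_mul_of_nonneg_right (hmin i hiT) hgi.le
              _ = l i := div_mul_cancel₀ _ hgi.ne'
          simpa [hl'] using sub_nonneg.2 this
        · have hgi : gh i ≤ 0 := by
            by_cases his : i ∈ s
            · by_contra hc
              exact hiT (Finset.mem_filter.2 ⟨his, by push_neg at hc; exact hc⟩)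
            · simp [hgh, dif_neg his]
          have : t * gh i ≤ 0 := mul_nonpos_of_nonneg_of_nonpos ht0 hgi
          simp only [hl', sub_nonneg]
          exact le_trans this (hl0 i)
      have hl's : ∀ i ∉ s.erase i₁, l' i = 0 := by
        intro i hi
        by_cases his : i ∈ s
        · have hii : i = i₁ := by
            by_contra hc
            exact hi (Finset.mem_erase.2 ⟨hc, his⟩)
          subst hii
          simp [hl', ht, div_mul_cancel₀ _ hgi₁.ne']
        · have : gh i = 0 := by simp [hgh, dif_neg his]
          simp [hl', this, hls i his]
      have hsum' : ∑ i, l' i • v i = ∑ i, l i • v i := by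
        simp only [hl', sub_smul, Finset.sum_sub_distrib, mul_smul]
        rw [← Finset.smul_sum, hghsum, smul_zero, sub_zero]
      obtain ⟨J, l'', hJ, h1, h2, h3⟩ := IH (s.erase i₁) (Finset.erase_ssubset hi₁s) l' hl'0 hl's
      exact ⟨J, l'', hJ, h1, h2, h3.trans hsum'⟩


lemma isClosed_coneGen {r : ℕ} (v : Fin r → E) :
    IsClosed {w : E | ∃ l : Fin r → ℝ, (∀ i, 0 ≤ l i) ∧ w = ∑ i, l i • v i} := by
  classical
  have hsum_support : ∀ (J : Finset (Fin r)) (l : Fin r → ℝ), (∀ i ∉ J, l i = 0) →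
      ∑ i, l i • v i = ∑ i : J, l i • v (i : Fin r) := by
    intro J l hl
    rw [← Finset.sum_subset (Finset.subset_univ J) (by intro i _ hi; rw [hl i hi, zero_smul]),
      ← Finset.sum_attach J (fun i => l i • v i)]
    rfl
  have hD : ∀ J : Finset (Fin r), LinearIndependent ℝ (fun i : J => v i) →
      IsClosed {w : E | ∃ l : Fin r → ℝ, (∀ i, 0 ≤ l i) ∧ (∀ i ∉ J, l i = 0) ∧
        w = ∑ i, l i • v i} := by
    intro J hJ
    set T : (J → ℝ) →ₗ[ℝ] E :=
      { toFun := fun l => ∑ i : J, l i • v (i : Fin r)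
        map_add' := by intro x y; simp [add_smul, Finset.sum_add_distrib]
        map_smul' := by intro c x; simp [smul_smul, Finset.smul_sum] } with hT
    have hTinj : Function.Injective T := by
      rw [← LinearMap.ker_eq_bot, LinearMap.ker_eq_bot']
      intro g hg
      have := Fintype.linearIndependent_iff.1 hJ g hg
      funext i; exact this i
    have hemb := LinearMap.isClosedEmbedding_of_injective
      ((LinearMap.ker_eq_bot (M := J → ℝ)).2 hTinj)
    have himg : {w : E | ∃ l : Fin r → ℝ, (∀ i, 0 ≤ l i) ∧ (∀ i ∉ J, l i = 0) ∧
        w = ∑ i, l i • v i} = T '' {l : J → ℝ | ∀ i, 0 ≤ l i} := by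
      ext w
      constructor
      · rintro ⟨l, hl0, hlJ, rfl⟩
        exact ⟨fun i => l i, fun i => hl0 i, by rw [hsum_support J l hlJ]; rfl⟩
      · rintro ⟨lJ, hlJ0, rfl⟩
        refine ⟨fun i => if h : i ∈ J then lJ ⟨i, h⟩ else 0, ?_, ?_, ?_⟩
        · intro i; by_cases h : i ∈ J <;> simp [h] <;> exact hlJ0 _
        · intro i hi; simp [dif_neg hi]
        · rw [hsum_support J _ (by intro i hi; simp [dif_neg hi])]
          simp only [hT, LinearMap.coe_mk, AddHom.coe_mk]
          exact Finset.sum_congr rfl fun i _ => by simp [dif_pos i.2]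
    rw [himg]
    refine (hemb.isClosedMap) _ ?_
    have : {l : J → ℝ | ∀ i, 0 ≤ l i} = ⋂ i : J, {l : J → ℝ | 0 ≤ l i} := by
      ext l; simp [Set.mem_iInter]
    rw [this]
    exact isClosed_iInter fun i => isClosed_le continuous_const (continuous_apply i)
  have hcover : {w : E | ∃ l : Fin r → ℝ, (∀ i, 0 ≤ l i) ∧ w = ∑ i, l i • v i} =
      ⋃ J ∈ {J : Finset (Fin r) | LinearIndependent ℝ (fun i : J => v i)},
        {w : E | ∃ l : Fin r → ℝ, (∀ i, 0 ≤ l i) ∧ (∀ i ∉ J, l i = 0) ∧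
          w = ∑ i, l i • v i} := by
    ext w
    simp only [Set.mem_iUnion, Set.mem_setOf_eq]
    constructor
    · rintro ⟨l, hl0, rfl⟩
      obtain ⟨J, l', hJ, h1, h2, h3⟩ := coneGen_cara v Finset.univ l hl0 (by simp)
      exact ⟨J, hJ, l', h1, h2, h3.symm⟩
    · rintro ⟨J, hJ, l, hl0, _, rfl⟩
      exact ⟨l, hl0, rfl⟩
  rw [hcover]
  exact Set.Finite.isClosed_biUnion (Set.toFinite _) fun J hJ => hD J hJ

lemma convex_coneGen {r : ℕ} (v : Fin r → E) :
    Convex ℝ {w : E | ∃ l : Fin r → ℝ, (∀ i, 0 ≤ l i) ∧ w = ∑ i, l i • v i} := by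
  rintro x ⟨lx, hlx, rfl⟩ y ⟨ly, hly, rfl⟩ p q hp hq hpq
  refine ⟨fun i => p * lx i + q * ly i,
    fun i => add_nonneg (mul_nonneg hp (hlx i)) (mul_nonneg hq (hly i)), ?_⟩
  simp only [add_smul, Finset.sum_add_distrib, mul_smul]
  rw [← Finset.smul_sum, ← Finset.smul_sum]

end Cone

section Pairing

variable {d : ℕ}

lemma pairing_add (n : Fin d → ℤ) (x y : Fin d → ℝ) :
    pairing n (x + y) = pairing n x + pairing n y := by
  simp only [pairing, Pi.add_apply, mul_add, Finset.sum_add_distrib]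

lemma pairing_smul (n : Fin d → ℤ) (c : ℝ) (x : Fin d → ℝ) :
    pairing n (c • x) = c * pairing n x := by
  simp only [pairing, Pi.smul_apply, smul_eq_mul, Finset.mul_sum]
  exact Finset.sum_congr rfl fun i _ => by ring

lemma pairing_continuous (n : Fin d → ℤ) : Continuous (pairing n) := by
  unfold pairing
  exact continuous_finset_sum _ fun i _ => continuous_const.mul (continuous_apply i)

lemma pairing_islinear (n : Fin d → ℤ) : IsLinearMap ℝ (pairing n) :=
  ⟨pairing_add n, fun c x => pairing_smul n c x⟩

/-- standard basis vector -/
noncomputable def stdb (d : ℕ) (i : Fin d) : Fin d → ℝ := fun j => if i = j then 1 else 0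

lemma clm_rep (f : (Fin d → ℝ) →L[ℝ] ℝ) (x : Fin d → ℝ) :
    f x = ∑ i, x i * f (stdb d i) := by
  conv_lhs => rw [pi_eq_sum_univ x]
  rw [map_sum]
  exact Finset.sum_congr rfl fun i _ => by rw [map_smul]; rfl

lemma pairing_stdbvec (n : Fin d → ℤ) (g : (Fin d → ℝ) →L[ℝ] ℝ) :
    pairing n (fun j => g (stdb d j)) = g (fun j => ((n j : ℤ) : ℝ)) := by
  rw [clm_rep g (fun j => ((n j : ℤ) : ℝ))]
  rfl

lemma clm_swap (f g : (Fin d → ℝ) →L[ℝ] ℝ) :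
    f (fun j => g (stdb d j)) = g (fun j => f (stdb d j)) := by
  rw [clm_rep f (fun j => g (stdb d j)), clm_rep g (fun j => f (stdb d j))]
  exact Finset.sum_congr rfl fun i _ => mul_comm _ _

end Pairing

section Farkas

/-- At a minimizer of a linear functional over a polyhedron, the functional lies in
the cone generated by the active constraint normals. -/
lemma farkas_min {d m : ℕ} (n : Fin m → Fin d → ℤ) (h : Fin m → ℤ)
    {P : Set (Fin d → ℝ)} (hPeq : P = {x | ∀ i, pairing (n i) x ≥ -(h i : ℝ)})
    (hPc : IsCompact P) (hPne : P.Nonempty) (f : (Fin d → ℝ) →L[ℝ] ℝ) :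
    ∃ (p : Fin d → ℝ) (l : Fin m → ℝ), p ∈ P ∧ (∀ i, 0 ≤ l i) ∧
      (∀ i, l i ≠ 0 → pairing (n i) p = -(h i : ℝ)) ∧
      ∀ y, f y = ∑ i, l i * pairing (n i) y := by
  classical
  obtain ⟨p, hpP, hpmin⟩ := hPc.exists_isMinOn hPne f.continuous.continuousOn
  set v : Fin m → (Fin d → ℝ) := fun i =>
    if pairing (n i) p = -(h i : ℝ) then (fun j => ((n i j : ℤ) : ℝ)) else 0 with hv
  set C := {w : Fin d → ℝ | ∃ l : Fin m → ℝ, (∀ i, 0 ≤ l i) ∧ w = ∑ i, l i • v i} with hC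
  set uf : Fin d → ℝ := fun j => f (stdb d j) with huf
  have hufC : uf ∈ C := by
    by_contra hnot
    obtain ⟨g, s, hgs, hgb⟩ :=
      geometric_hahn_banach_point_closed (convex_coneGen v) (isClosed_coneGen v) hnot
    have hs0 : s < 0 := by
      have h0 : (0 : Fin d → ℝ) ∈ C := ⟨0, by simp, by simp⟩
      simpa using hgb _ h0
    have hvge : ∀ i, 0 ≤ g (v i) := by
      intro i
      by_contra hneg
      push_neg at hneg
      have ht0 : 0 ≤ (s - 1) / g (v i) := by
        rw [div_nonneg_iff]; right; constructor <;> linarith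
      have hmem : ((s - 1) / g (v i)) • v i ∈ C := by
        refine ⟨fun i' => if i' = i then (s - 1) / g (v i) else 0, ?_, ?_⟩
        · intro i'; by_cases hi' : i' = i <;> simp [hi', ht0]
        · symm
          calc ∑ i', (if i' = i then (s - 1) / g (v i) else 0) • v i'
              = ∑ i', (if i' = i then ((s - 1) / g (v i)) • v i' else 0) := by
                refine Finset.sum_congr rfl fun i' _ => ?_
                by_cases hii : i' = i <;> simp [hii]
            _ = ((s - 1) / g (v i)) • v i := by
                rw [Finset.sum_ite_eq' Finset.univ i]; simp
      have hlt := hgb _ hmem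
      rw [map_smul, smul_eq_mul, div_mul_cancel₀ _ (ne_of_lt hneg)] at hlt
      linarith
    set w : Fin d → ℝ := fun j => g (stdb d j) with hw
    have hfw : f w = g uf := clm_swap f g
    have hfwneg : f w < 0 := by rw [hfw]; linarith
    have hactw : ∀ i, pairing (n i) p = -(h i : ℝ) → 0 ≤ pairing (n i) w := by
      intro i hi
      have : pairing (n i) w = g (v i) := by
        rw [pairing_stdbvec (n i) g, hv]; simp [hi]
      rw [this]; exact hvge i
    -- construct the step size ε
    set Fs : Finset ℝ := insert 1 ((Finset.univ.filter
        (fun i => ¬ pairing (n i) p = -(h i : ℝ))).image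
        (fun i => (pairing (n i) p + (h i : ℝ)) / (|pairing (n i) w| + 1))) with hFs
    have hFsne : Fs.Nonempty := Finset.insert_nonempty _ _
    set ε : ℝ := Fs.min' hFsne with hε
    have hpPineq : ∀ i, pairing (n i) p ≥ -(h i : ℝ) := by
      have := hpP; rw [hPeq] at this; exact this
    have hslack : ∀ i, ¬ pairing (n i) p = -(h i : ℝ) → 0 < pairing (n i) p + (h i : ℝ) := by
      intro i hi
      have := hpPineq i
      rcases lt_or_eq_of_le this with hlt | heq
      · linarith
      · exact absurd heq.symm hi
    have hεpos : 0 < ε := by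
      have hmem := Fs.min'_mem hFsne
      rw [← hε] at hmem
      rw [hFs] at hmem
      rcases Finset.mem_insert.1 hmem with h1 | h2
      · rw [h1]; norm_num
      · obtain ⟨i, hi, hieq⟩ := Finset.mem_image.1 h2
        rw [← hieq]
        have := hslack i (Finset.mem_filter.1 hi).2
        positivity
    have hεs : ∀ i, ¬ pairing (n i) p = -(h i : ℝ) →
        ε ≤ (pairing (n i) p + (h i : ℝ)) / (|pairing (n i) w| + 1) := by
      intro i hi
      apply Fs.min'_le
      rw [hFs]
      exact Finset.mem_insert_of_mem (Finset.mem_image.2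
        ⟨i, Finset.mem_filter.2 ⟨Finset.mem_univ i, hi⟩, rfl⟩)
    have hmemP : p + ε • w ∈ P := by
      rw [hPeq]
      intro i
      rw [pairing_add, pairing_smul]
      by_cases hi : pairing (n i) p = -(h i : ℝ)
      · have := mul_nonneg hεpos.le (hactw i hi)
        rw [hi]; linarith
      · set q := pairing (n i) w with hq
        have hsl := hslack i hi
        have hkey : ε * |q| < pairing (n i) p + (h i : ℝ) := by
          calc ε * |q| ≤ (pairing (n i) p + (h i : ℝ)) / (|q| + 1) * |q| :=
                mul_le_mul_of_nonneg_right (hεs i hi) (abs_nonneg q)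
            _ < pairing (n i) p + (h i : ℝ) := by
                rw [div_mul_eq_mul_div, div_lt_iff₀ (by positivity)]
                nlinarith [abs_nonneg q]
        have : -(ε * |q|) ≤ ε * q := by
          have := neg_abs_le q
          nlinarith
        linarith
    have hdec : f p ≤ f (p + ε • w) := hpmin hmemP
    rw [map_add, map_smul, smul_eq_mul] at hdec
    nlinarith
  obtain ⟨l, hl0, hlsum⟩ := hufC
  refine ⟨p, fun i => if pairing (n i) p = -(h i : ℝ) then l i else 0, hpP, ?_, ?_, ?_⟩
  · intro i; by_cases hi : pairing (n i) p = -(h i : ℝ) <;> simp [hi, hl0 i]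
  · intro i hli
    by_cases hi : pairing (n i) p = -(h i : ℝ)
    · exact hi
    · simp [hi] at hli
  · intro y
    rw [clm_rep f y]
    have hufj : ∀ j, uf j = ∑ i, l i * v i j := by
      intro j; rw [hlsum]; simp [Finset.sum_apply]
    calc ∑ j, y j * f (stdb d j) = ∑ j, ∑ i, y j * (l i * v i j) := by
          refine Finset.sum_congr rfl fun j _ => ?_
          rw [show f (stdb d j) = uf j from rfl, hufj j, Finset.mul_sum]
      _ = ∑ i, ∑ j, y j * (l i * v i j) := Finset.sum_comm
      _ = ∑ i, (if pairing (n i) p = -(h i : ℝ) then l i else 0) * pairing (n i) y := by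
          refine Finset.sum_congr rfl fun i _ => ?_
          by_cases hi : pairing (n i) p = -(h i : ℝ)
          · have hvp : v i = fun j => ((n i j : ℤ) : ℝ) := by
              simp only [hv]; rw [if_pos hi]
            rw [hvp, if_pos hi]
            simp only [pairing, Finset.mul_sum]
            exact Finset.sum_congr rfl fun j _ => by ring
          · have hvp : v i = 0 := by
              simp only [hv]; rw [if_neg hi]
            simp [hvp, if_neg hi]

end Farkas

section Poly

variable {d : ℕ}

lemma lattice_pairing_int {x : Fin d → ℝ} (hx : x ∈ latticePoints d) (n : Fin d → ℤ) :
    ∃ z : ℤ, pairing n x = (z : ℝ) := by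
  obtain ⟨z, hz⟩ : ∃ z : Fin d → ℤ, ∀ i, x i = (z i : ℝ) :=
    ⟨fun i => (hx i).choose, fun i => (hx i).choose_spec⟩
  refine ⟨∑ i, n i * z i, ?_⟩
  rw [pairing]
  push_cast
  exact Finset.sum_congr rfl fun i _ => by rw [hz i]

lemma lattice_pairing_ge {x : Fin d → ℝ} (hx : x ∈ latticePoints d) (n : Fin d → ℤ) (c : ℤ)
    (hgt : pairing n x > -(c : ℝ)) : pairing n x ≥ 1 - (c : ℝ) := by
  obtain ⟨z, hz⟩ := lattice_pairing_int hx n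
  rw [hz] at hgt ⊢
  have hz' : -c < z := by exact_mod_cast hgt
  have : 1 - c ≤ z := by omega
  exact_mod_cast this

lemma smul_poly {m : ℕ} {P : Set (Fin d → ℝ)} {n : Fin m → Fin d → ℤ} {h : Fin m → ℤ}
    (hPeq : P = {x | ∀ i, pairing (n i) x ≥ -(h i : ℝ)}) {k : ℕ} (hk : 1 ≤ k) :
    (k : ℝ) • P = {x | ∀ i, pairing (n i) x ≥ -((k : ℝ) * (h i : ℝ))} := by
  have hk0 : (0 : ℝ) < (k : ℝ) := by exact_mod_cast hk
  ext x
  constructor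
  · rintro ⟨y, hy, rfl⟩
    intro i
    rw [pairing_smul]
    have := (hPeq ▸ hy) i
    nlinarith
  · intro hx
    refine ⟨(k : ℝ)⁻¹ • x, ?_, smul_inv_smul₀ hk0.ne' x⟩
    rw [hPeq]
    intro i
    rw [pairing_smul]
    have := hx i
    have h2 : (k : ℝ)⁻¹ * (-((k:ℝ) * (h i : ℝ))) ≤ (k:ℝ)⁻¹ * pairing (n i) x :=
      mul_le_mul_of_nonneg_left this (by positivity)
    calc -(h i : ℝ) = (k : ℝ)⁻¹ * (-((k:ℝ) * (h i : ℝ))) := by field_simp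
      _ ≤ (k:ℝ)⁻¹ * pairing (n i) x := h2

lemma interior_smul_poly {m : ℕ} {P : Set (Fin d → ℝ)} {n : Fin m → Fin d → ℤ} {h : Fin m → ℤ}
    (hPeq : P = {x | ∀ i, pairing (n i) x ≥ -(h i : ℝ)})
    (hprim : ∀ i, Finset.univ.gcd (n i) = 1) {k : ℕ} (hk : 1 ≤ k) :
    interior ((k : ℝ) • P) = {x | ∀ i, pairing (n i) x > -((k : ℝ) * (h i : ℝ))} := by
  have hset := smul_poly hPeq hk
  apply subset_antisymm
  · intro x hx i
    have hxmem : x ∈ (k : ℝ) • P := interior_subset hx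
    have hge : pairing (n i) x ≥ -((k : ℝ) * (h i : ℝ)) := (hset ▸ hxmem) i
    rcases lt_or_eq_of_le hge with hlt | heq
    · exact hlt
    · exfalso
      -- the normal is nonzero
      have hne : n i ≠ 0 := by
        intro hzero
        have h1 := hprim i
        rw [hzero] at h1
        have h0 : Finset.univ.gcd (0 : Fin d → ℤ) = 0 :=
          Finset.gcd_eq_zero_iff.2 (fun i _ => rfl)
        rw [h0] at h1
        exact zero_ne_one h1
      obtain ⟨j, hj⟩ : ∃ j, n i j ≠ 0 := by
        by_contra hc
        push_neg at hc
        exact hne (funext hc)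
      set w : Fin d → ℝ := fun j => ((n i j : ℤ) : ℝ) with hw
      have hpw : 0 < pairing (n i) w := by
        rw [pairing]
        apply Finset.sum_pos' (fun j' _ => mul_self_nonneg _)
        refine ⟨j, Finset.mem_univ j, ?_⟩
        have hcast : ((n i j : ℤ) : ℝ) ≠ 0 := Int.cast_ne_zero.2 hj
        simpa [hw] using mul_self_pos.2 hcast
      obtain ⟨ε, hεpos, hball⟩ := Metric.mem_nhds_iff.1 (mem_interior_iff_mem_nhds.1 hx)
      set t : ℝ := ε / (2 * (‖w‖ + 1)) with htdef
      have hwn : (0:ℝ) < ‖w‖ + 1 := by positivity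
      have ht : 0 < t := by positivity
      have hmem : x - t • w ∈ (k : ℝ) • P := by
        apply hball
        rw [Metric.mem_ball, dist_eq_norm]
        have : x - t • w - x = -(t • w) := by abel
        rw [this, norm_neg, norm_smul, Real.norm_eq_abs, abs_of_pos ht]
        calc t * ‖w‖ ≤ t * (‖w‖ + 1) := by nlinarith [norm_nonneg w]
          _ = ε / 2 := by rw [htdef]; field_simp
          _ < ε := by linarith
      have hthis := (hset ▸ hmem) i
      rw [sub_eq_add_neg, pairing_add, ← smul_neg, pairing_smul] at hthis
      have hpwn : pairing (n i) (-w) = -pairing (n i) w := by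
        have h2 := pairing_smul (n i) (-1) w
        simpa using h2
      rw [hpwn, ← heq] at hthis
      nlinarith
  · apply interior_maximal
    · intro x hx
      rw [hset]
      exact fun i => le_of_lt (hx i)
    · have : {x | ∀ i, pairing (n i) x > -((k : ℝ) * (h i : ℝ))} =
          ⋂ i, {x | pairing (n i) x > -((k : ℝ) * (h i : ℝ))} := by
        ext x; simp [Set.mem_iInter]
      rw [this]
      exact isOpen_iInter_of_finite fun i =>
        isOpen_lt continuous_const (pairing_continuous (n i))

lemma lattice_bounded_finite (S : Set (Fin d → ℝ)) (hb : Bornology.IsBounded S) :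
    (S ∩ latticePoints d).Finite := by
  obtain ⟨r, hr⟩ := (Metric.isBounded_iff_subset_closedBall 0).1 hb
  set N : ℤ := ⌈r⌉ with hN
  have hsub : S ∩ latticePoints d ⊆
      (fun z : Fin d → ℤ => fun i => (z i : ℝ)) '' {z | ∀ i, z i ∈ Set.Icc (-N) N} := by
    rintro x ⟨hxS, hxlat⟩
    obtain ⟨z, hz⟩ : ∃ z : Fin d → ℤ, ∀ i, x i = (z i : ℝ) :=
      ⟨fun i => (hxlat i).choose, fun i => (hxlat i).choose_spec⟩
    refine ⟨z, ?_, by funext i; rw [hz i]⟩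
    intro i
    have hxball := hr hxS
    rw [Metric.mem_closedBall, dist_zero_right] at hxball
    have hxi : |x i| ≤ r := le_trans (norm_le_pi_norm x i) hxball
    have hzi : |(z i : ℝ)| ≤ (N : ℝ) := by
      rw [← hz i]
      exact le_trans hxi (by exact_mod_cast Int.le_ceil r)
    have hab : |z i| ≤ N := by exact_mod_cast hzi
    rw [abs_le] at hab
    rw [Set.mem_Icc]
    exact hab
  refine Set.Finite.subset (Set.Finite.image _ ?_) hsub
  have : {z : Fin d → ℤ | ∀ i, z i ∈ Set.Icc (-N) N} =
      Set.pi Set.univ (fun _ => Set.Icc (-N) N) := by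
    ext z; simp [Set.mem_pi, Pi.le_def, forall_and]
  rw [this]
  exact Set.Finite.pi fun _ => Set.finite_Icc _ _

lemma convexHull_pairing_ge {S : Set (Fin d → ℝ)} (n : Fin d → ℤ) (b : ℝ)
    (hS : ∀ s ∈ S, pairing n s ≥ b) : ∀ x ∈ convexHull ℝ S, pairing n x ≥ b :=
  fun _ hx => convexHull_min hS (convex_halfSpace_ge (pairing_islinear n) b) hx

end Poly

section Master

/-- The key inclusion: any point satisfying the dilated-interior inequalities lies in
`F + c • P`, where `F` is a summand of `P` bounded below appropriately. -/
lemma master_mem {d m : ℕ} {P : Set (Fin d → ℝ)}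
    (n : Fin m → Fin d → ℤ) (h : Fin m → ℤ)
    (hPeq : P = {x | ∀ i, pairing (n i) x ≥ -(h i : ℝ)})
    (hPc : IsCompact P) (hPne : P.Nonempty) (hPconv : Convex ℝ P)
    (a : ℕ)
    (F : Set (Fin d → ℝ)) (hFc : IsCompact F) (hFconv : Convex ℝ F)
    (hFbound : ∀ f ∈ F, ∀ i, pairing (n i) f ≥ 1 - (a : ℝ) * (h i : ℝ))
    (R : Set (Fin d → ℝ))
    (hRbound : ∀ r ∈ R, ∀ i, pairing (n i) r ≥ ((a : ℝ) - 1) * (h i : ℝ) - 1)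
    (hdecomp : P = F + R)
    (c : ℝ) (hc : 0 ≤ c)
    (x : Fin d → ℝ) (hx : ∀ i, pairing (n i) x ≥ 1 - ((a : ℝ) + c) * (h i : ℝ)) :
    x ∈ F + c • P := by
  have htc : IsCompact (F + c • P) := hFc.add (hPc.smul c)
  have htconv : Convex ℝ (F + c • P) := hFconv.add (hPconv.smul c)
  by_contra hxmem
  obtain ⟨f, s, hfs, hfb⟩ :=
    geometric_hahn_banach_point_closed htconv htc.isClosed hxmem
  obtain ⟨p, l, hpP, hl0, hlact, hlrep⟩ := farkas_min n h hPeq hPc hPne f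
  obtain ⟨f₀, hf₀F, r₀, hr₀R, hsum⟩ := Set.mem_add.1 (hdecomp ▸ hpP)
  have hkey : ∀ i, l i ≠ 0 → pairing (n i) f₀ = 1 - (a : ℝ) * (h i : ℝ) := by
    intro i hli
    have hact := hlact i hli
    have hps : pairing (n i) f₀ + pairing (n i) r₀ = -(h i : ℝ) := by
      rw [← pairing_add, hsum, hact]
    have h1 := hFbound f₀ hf₀F i
    have h2 := hRbound r₀ hr₀R i
    linarith
  have hmem : f₀ + c • p ∈ F + c • P :=
    Set.add_mem_add hf₀F (Set.smul_mem_smul_set hpP)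
  have hval : f (f₀ + c • p) = ∑ i, l i * (1 - ((a : ℝ) + c) * (h i : ℝ)) := by
    rw [hlrep (f₀ + c • p)]
    refine Finset.sum_congr rfl fun i _ => ?_
    by_cases hli : l i = 0
    · simp [hli]
    · rw [pairing_add, pairing_smul, hkey i hli, hlact i hli]
      ring
  have hge : f x ≥ f (f₀ + c • p) := by
    rw [hval, hlrep x]
    exact Finset.sum_le_sum fun i _ => mul_le_mul_of_nonneg_left (hx i) (hl0 i)
  have := hfb _ hmem
  linarith

end Master

theorem stmt_6 {d : ℕ} (hd : 1 ≤ d) (P : Set (Fin d → ℝ))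
    (hP : IsLatticePolytope P) (hfull : (interior P).Nonempty)
    {m : ℕ} (n : Fin m → Fin d → ℤ) (h : Fin m → ℤ)
    (hpres : IsFacetPresentation P n h)
    (a : ℕ) (ha : IsCodegree P a)
    (hdecomp : P = floorPoly ((a : ℝ) • P) + remPoly n h a) :
    ∀ k' : ℕ, a ≤ k' →
      floorPoly ((k' : ℝ) • P) =
        floorPoly ((a : ℝ) • P) + ((k' - a : ℕ) : ℝ) • P := by
  intro k' hk'
  obtain ⟨hPeq, hprim, -⟩ := hpres
  obtain ⟨V, hVlat, hPV⟩ := hP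
  have hPc : IsCompact P := by rw [hPV]; exact V.finite_toSet.isCompact_convexHull ℝ
  have hPconv : Convex ℝ P := by rw [hPV]; exact convex_convexHull ℝ _
  have hPne : P.Nonempty := hfull.mono interior_subset
  have ha1 : 1 ≤ a := ha.1
  have hk1 : 1 ≤ k' := le_trans ha1 hk'
  set c : ℝ := ((k' - a : ℕ) : ℝ) with hcdef
  have hcval : (k' : ℝ) = (a : ℝ) + c := by
    rw [hcdef, Nat.cast_sub hk']; ring
  have hc0 : (0:ℝ) ≤ c := Nat.cast_nonneg _
  set S : Set (Fin d → ℝ) := interior ((a:ℝ) • P) ∩ latticePoints d with hS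
  have hSbound : ∀ x ∈ S, ∀ i, pairing (n i) x ≥ 1 - (a:ℝ) * (h i : ℝ) := by
    intro x hxS i
    have hxint := hxS.1
    rw [interior_smul_poly hPeq hprim ha1] at hxint
    have hgt : pairing (n i) x > -(((a * h i : ℤ)):ℝ) := by push_cast; exact hxint i
    have hge := lattice_pairing_ge hxS.2 (n i) (a * h i) hgt
    push_cast at hge
    linarith
  have hFbound : ∀ f ∈ floorPoly ((a:ℝ) • P), ∀ i,
      pairing (n i) f ≥ 1 - (a:ℝ) * (h i:ℝ) := by
    intro f hf i
    exact convexHull_pairing_ge (n i) _ (fun s hs => hSbound s hs i) f hf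
  have hRbound : ∀ r ∈ remPoly n h a, ∀ i,
      pairing (n i) r ≥ ((a:ℝ) - 1) * (h i:ℝ) - 1 := by
    intro r hr i
    exact convexHull_pairing_ge (n i) _ (fun s hs => hs.2 i) r hr
  have hSfin : S.Finite := by
    apply lattice_bounded_finite
    exact ((hPc.smul (a:ℝ)).isBounded).subset interior_subset
  have hFc : IsCompact (floorPoly ((a:ℝ) • P)) := hSfin.isCompact_convexHull ℝ
  have hFconv : Convex ℝ (floorPoly ((a:ℝ) • P)) := convex_convexHull ℝ _
  have hsub1 : floorPoly ((k':ℝ) • P) ⊆ floorPoly ((a:ℝ) • P) + c • P := by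
    apply convexHull_min ?_ (hFconv.add (hPconv.smul c))
    rintro x ⟨hxint, hxlat⟩
    rw [interior_smul_poly hPeq hprim hk1] at hxint
    have hx : ∀ i, pairing (n i) x ≥ 1 - ((a:ℝ) + c) * (h i:ℝ) := by
      intro i
      have hgt : pairing (n i) x > -(((k' * h i : ℤ)):ℝ) := by push_cast; exact hxint i
      have hge := lattice_pairing_ge hxlat (n i) (k' * h i) hgt
      push_cast at hge
      rw [← hcval]
      linarith
    exact master_mem n h hPeq hPc hPne hPconv a _ hFc hFconv hFbound _ hRbound
      hdecomp c hc0 x hx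
  have hsub2 : floorPoly ((a:ℝ) • P) + c • P ⊆ floorPoly ((k':ℝ) • P) := by
    have hgen : S + c • (V : Set (Fin d → ℝ)) ⊆
        interior ((k':ℝ) • P) ∩ latticePoints d := by
      intro y hy
      obtain ⟨sv, hsv, cv, hcv, rfl⟩ := Set.mem_add.1 hy
      obtain ⟨v, hvV, rfl⟩ := Set.mem_smul_set.1 hcv
      have hvP : v ∈ P := by rw [hPV]; exact subset_convexHull ℝ _ hvV
      constructor
      · rw [interior_smul_poly hPeq hprim hk1]
        intro i
        rw [pairing_add, pairing_smul]
        have h1 := hSbound sv hsv i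
        have h2 : pairing (n i) v ≥ -(h i:ℝ) := by
          have := hvP; rw [hPeq] at this; exact this i
        have h3 : c * pairing (n i) v ≥ c * (-(h i:ℝ)) :=
          mul_le_mul_of_nonneg_left h2 hc0
        rw [hcval]
        nlinarith
      · intro j
        obtain ⟨zs, hzs⟩ := hsv.2 j
        obtain ⟨zv, hzv⟩ := (hVlat hvV) j
        refine ⟨zs + (k' - a : ℕ) * zv, ?_⟩
        rw [Pi.add_apply, Pi.smul_apply, smul_eq_mul, hzs, hzv, hcdef]
        push_cast
        ring
    have heq : floorPoly ((a:ℝ) • P) + c • P =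
        convexHull ℝ (S + c • (V : Set (Fin d → ℝ))) := by
      rw [convexHull_add, convexHull_smul, ← hPV]
      rfl
    rw [heq]
    exact convexHull_mono hgen
  exact subset_antisymm hsub1 hsub2
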